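/- Let A and B be Hermitian matrices and τ > 0. Then ‖e^{τA} e^{−τB}‖ ≤ exp(∫₀^τ ‖e^{xA}(A−B)e^{−xA}‖ dx), where ‖·‖ is the operator norm. In particular, if ‖e^{xA}(A−B)e^{−xA}‖ ≤ K for all x ∈ [0,τ], then ‖e^{τA} e^{−τB}‖ ≤ e^{τK}. -/

import Mathlib

open scoped Matrix.Norms.L2Operator

/-- If `‖e^{xA}(A−B)e^{−xA}‖ ≤ K` for all `x ∈ [0,τ]`, then
`‖e^{τA} e^{−τB}‖ ≤ e^{τK}`. -/
theorem exp_product_norm_bound {n : Type*} [Fintype n] [DecidableEq n]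
    (A B : Matrix n n ℂ) (hA : A.IsHermitian) (hB : B.IsHermitian)
    (τ K : ℝ) (hτ : 0 < τ)
    (hK : ∀ x ∈ Set.Icc (0 : ℝ) τ,
      ‖NormedSpace.exp (x • A) * (A - B) * NormedSpace.exp (-(x • A))‖ ≤ K) :
    ‖NormedSpace.exp (τ • A) * NormedSpace.exp (-(τ • B))‖ ≤
      Real.exp (τ * K) := by
  open NormedSpace in
  set F : ℝ → Matrix n n ℂ := fun x => exp (x • A) * exp (x • (-B)) with hFdef
  set F' : ℝ → Matrix n n ℂ := fun x => exp (x • A) * (A - B) * exp (x • (-B)) with hF'def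
  have hF : ∀ x : ℝ, HasDerivAt F (F' x) x := by
    intro x
    have h1 : HasDerivAt (fun u : ℝ => exp (u • A)) (exp (x • A) * A) x := by
      have := hasDerivAt_exp_smul_const (𝕂 := ℝ) A x
      exact this
    have h2 : HasDerivAt (fun u : ℝ => exp (u • (-B))) ((-B) * exp (x • (-B))) x := by
      have := hasDerivAt_exp_smul_const' (𝕂 := ℝ) (-B) x
      exact this
    have := h1.mul h2
    refine this.congr_deriv ?_
    simp only [F', sub_mul, mul_sub, mul_neg, neg_mul, mul_assoc]
    abel
  have key : ∀ x : ℝ, exp (-(x • A)) * exp (x • A) = 1 := by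
    intro x
    rw [← Matrix.exp_add_of_commute _ _ (Commute.neg_left (Commute.refl (x • A))), neg_add_cancel, exp_zero]
  have bound : ∀ x ∈ Set.Ico (0 : ℝ) τ, ‖F' x‖ ≤ K * ‖F x‖ + 0 := by
    intro x hx
    have hsplit : F' x = (exp (x • A) * (A - B) * exp (-(x • A))) * F x := by
      simp only [F', F, mul_assoc]
      rw [← mul_assoc (exp (-(x • A))), key x, one_mul]
    rw [hsplit, add_zero]
    calc ‖(exp (x • A) * (A - B) * exp (-(x • A))) * F x‖
        ≤ ‖exp (x • A) * (A - B) * exp (-(x • A))‖ * ‖F x‖ := norm_mul_le _ _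
      _ ≤ K * ‖F x‖ := by
          exact mul_le_mul_of_nonneg_right (hK x ⟨hx.1, hx.2.le⟩) (norm_nonneg _)
  have hcont : ContinuousOn F (Set.Icc 0 τ) :=
    fun x _ => (hF x).continuousAt.continuousWithinAt
  have hF0 : ‖F 0‖ ≤ 1 := by
    simp only [F, zero_smul, exp_zero, one_mul]
    rw [Matrix.cstar_norm_def, map_one]
    exact ContinuousLinearMap.norm_id_le
  have := norm_le_gronwallBound_of_norm_deriv_right_le hcont
    (fun x hx => (hF x).hasDerivWithinAt) hF0 bound τ ⟨hτ.le, le_refl τ⟩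
  rw [sub_zero, gronwallBound_ε0, one_mul, mul_comm] at this
  simpa only [F, smul_neg] using this
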